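/- Let ℓ ≥ 2 be an integer, ρ ≥ 1 a real number, OPT_1, …, OPT_ℓ nonnegative reals, and x, y real numbers satisfying x ≤ ρ·Σ_{i=1}^ℓ (i(i+1)/2)·OPT_i and y ≤ ℓ·ρ·Σ_{i=1}^ℓ OPT_i. Then min(x, y) ≤ ((ℓ+2)/3)·ρ·Σ_{i=1}^ℓ i·OPT_i. -/
import Mathlib


/-- Arithmetic core of the `(ℓ+2)/3·ρ` guarantee for the better of the top-down
solution (cost `x`) and bottom-up solution (cost `y`) for the multi-level Steiner
tree problem. -/
theorem stmt_2 (ℓ : ℕ) (hℓ : 2 ≤ ℓ) (ρ : ℝ) (hρ : 1 ≤ ρ)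
    (OPT : ℕ → ℝ) (hOPTnn : ∀ i ∈ Finset.Icc 1 ℓ, 0 ≤ OPT i)
    (x y : ℝ)
    (hx : x ≤ ρ * ∑ i ∈ Finset.Icc 1 ℓ, ((i : ℝ) * ((i : ℝ) + 1) / 2) * OPT i)
    (hy : y ≤ (ℓ : ℝ) * ρ * ∑ i ∈ Finset.Icc 1 ℓ, OPT i) :
    min x y ≤ (((ℓ : ℝ) + 2) / 3) * ρ * ∑ i ∈ Finset.Icc 1 ℓ, (i : ℝ) * OPT i := by
  have hρ0 : (0:ℝ) ≤ ρ := le_trans zero_le_one hρ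
  have hmin : min x y ≤ (2/3) * x + (1/3) * y := by
    have h1 : min x y ≤ x := min_le_left x y
    have h2 : min x y ≤ y := min_le_right x y
    linarith
  have key : ∑ i ∈ Finset.Icc 1 ℓ,
      ((2/3) * ((i : ℝ) * ((i : ℝ) + 1) / 2) + (ℓ : ℝ) / 3) * OPT i ≤
      ∑ i ∈ Finset.Icc 1 ℓ, (((ℓ : ℝ) + 2) / 3 * (i : ℝ)) * OPT i := by
    apply Finset.sum_le_sum
    intro i hi
    have hmem := Finset.mem_Icc.mp hi
    have h1 : (1:ℝ) ≤ (i:ℝ) := by exact_mod_cast hmem.1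
    have h2 : (i:ℝ) ≤ (ℓ:ℝ) := by exact_mod_cast hmem.2
    apply mul_le_mul_of_nonneg_right _ (hOPTnn i hi)
    nlinarith [mul_nonneg (sub_nonneg.mpr h1) (sub_nonneg.mpr h2)]
  have hsum1 : (2/3) * (ρ * ∑ i ∈ Finset.Icc 1 ℓ, ((i : ℝ) * ((i : ℝ) + 1) / 2) * OPT i)
      + (1/3) * ((ℓ : ℝ) * ρ * ∑ i ∈ Finset.Icc 1 ℓ, OPT i)
      = ρ * ∑ i ∈ Finset.Icc 1 ℓ,
        ((2/3) * ((i : ℝ) * ((i : ℝ) + 1) / 2) + (ℓ : ℝ) / 3) * OPT i := by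
    simp only [Finset.mul_sum, ← Finset.sum_add_distrib]
    exact Finset.sum_congr rfl fun i _ => by ring
  have htarget : (((ℓ : ℝ) + 2) / 3) * ρ * ∑ i ∈ Finset.Icc 1 ℓ, (i : ℝ) * OPT i
      = ρ * ∑ i ∈ Finset.Icc 1 ℓ, (((ℓ : ℝ) + 2) / 3 * (i : ℝ)) * OPT i := by
    simp only [Finset.mul_sum]
    exact Finset.sum_congr rfl fun i _ => by ring
  have h3 : (2/3) * x + (1/3) * y ≤
      (2/3) * (ρ * ∑ i ∈ Finset.Icc 1 ℓ, ((i : ℝ) * ((i : ℝ) + 1) / 2) * OPT i)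
      + (1/3) * ((ℓ : ℝ) * ρ * ∑ i ∈ Finset.Icc 1 ℓ, OPT i) := by linarith
  calc min x y ≤ (2/3) * x + (1/3) * y := hmin
    _ ≤ ρ * ∑ i ∈ Finset.Icc 1 ℓ,
        ((2/3) * ((i : ℝ) * ((i : ℝ) + 1) / 2) + (ℓ : ℝ) / 3) * OPT i := by
          rw [← hsum1]; exact h3
    _ ≤ ρ * ∑ i ∈ Finset.Icc 1 ℓ, (((ℓ : ℝ) + 2) / 3 * (i : ℝ)) * OPT i :=
          mul_le_mul_of_nonneg_left key hρ0
    _ = _ := htarget.symm
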